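/- Let θ be a weight function on the edges of a finite graph, negative on blue edges and positive on red edges, whose red edges form two disjoint clusters and whose blue edges join the clusters, such that the weights at each vertex sum to 0 and the sum of all negative weights equals −2ω with ω < π. Then every individual negative weight is at least −ω. -/
import Mathlib


variable {V : Type*}

open Finset

lemma sum_neighbors_eq_twice_edge_sum [Fintype V] [DecidableEq V]
    (G : SimpleGraph V) [DecidableRel G.Adj] (f : Sym2 V → ℝ) :
    ∑ x : V, ∑ w ∈ G.neighborFinset x, f s(x, w) = 2 * ∑ e ∈ G.edgeFinset, f e := by
  have h1 : ∑ d : G.Dart, f d.edge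
      = ∑ x : V, ∑ w ∈ G.neighborFinset x, f s(x, w) := by
    rw [← Finset.sum_fiberwise_of_maps_to (fun d _ => Finset.mem_univ d.fst)
      (f := fun d : G.Dart => f d.edge)]
    refine Finset.sum_congr rfl fun x _ => ?_
    rw [show (Finset.univ.filter fun d : G.Dart => d.fst = x) =
        ({d : G.Dart | d.fst = x} : Finset _) from rfl, SimpleGraph.dart_fst_fiber,
      Finset.sum_image (fun a _ b _ h => G.dartOfNeighborSet_injective x h)]
    have he : ∀ w : G.neighborSet x, (G.dartOfNeighborSet x w).edge = s(x, (w : V)) :=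
      fun w => rfl
    simp only [he]
    rw [Finset.sum_set_coe (f := fun w => f s(x, w))]
    rfl
  have h2 : ∑ d : G.Dart, f d.edge = ∑ e ∈ G.edgeFinset, 2 * f e := by
    rw [← Finset.sum_fiberwise_of_maps_to
      (g := fun d : G.Dart => d.edge) (t := G.edgeFinset)
      (fun d _ => by simp [d.edge_mem]) (f := fun d : G.Dart => f d.edge)]
    refine Finset.sum_congr rfl fun e he => ?_
    have hcard : #(Finset.univ.filter fun d : G.Dart => d.edge = e) = 2 :=
      G.dart_edge_fiber_card e (by simpa using he)
    calc ∑ d ∈ Finset.univ.filter (fun d : G.Dart => d.edge = e), f d.edge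
        = ∑ _d ∈ Finset.univ.filter (fun d : G.Dart => d.edge = e), f e :=
          Finset.sum_congr rfl (fun d hd => by rw [(Finset.mem_filter.mp hd).2])
      _ = 2 * f e := by rw [Finset.sum_const, hcard, nsmul_eq_mul]; norm_num
  rw [← h1, h2, Finset.mul_sum]


/-- Whether an edge is "blue", i.e. joins the two clusters of the 2-coloring `S` of the
vertices. -/
def isCross (S : V → Bool) : Sym2 V → Bool :=
  Sym2.lift ⟨fun u v => xor (S u) (S v), fun u v => Bool.xor_comm _ _⟩

/-- Let `θ` be a weight function on the edges of a finite graph whose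
vertices are split into two clusters (by `S : V → Bool`), positive on red edges (edges
within a cluster), negative on blue edges (edges joining the clusters), such that the
weights at each vertex sum to `0` and the sum over all blue edges equals `-2ω` with
`ω < π`.  Then every individual blue weight is at least `-ω`. -/
theorem blue_weight_ge_neg_omega [Fintype V] [DecidableEq V]
    (G : SimpleGraph V) [DecidableRel G.Adj] (S : V → Bool) (θ : Sym2 V → ℝ) (ω : ℝ)
    (hred : ∀ u v, G.Adj u v → S u = S v → 0 < θ s(u, v))
    (hblue : ∀ u v, G.Adj u v → S u ≠ S v → θ s(u, v) < 0)
    (hsum : ∀ v : V, ∑ u ∈ G.neighborFinset v, θ s(u, v) = 0)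
    (hblueSum : ∑ e ∈ G.edgeFinset, (if isCross S e then θ e else 0) = -2 * ω)
    (hω : ω < Real.pi) :
    ∀ u v, G.Adj u v → S u ≠ S v → -ω ≤ θ s(u, v) := by
  intro u v huv hne
  set b := S u with hb
  -- vertex sums in the s(x, w) orientation
  have hsum' : ∀ x : V, ∑ w ∈ G.neighborFinset x, θ s(x, w) = 0 := by
    intro x
    rw [← hsum x]
    exact Finset.sum_congr rfl fun w _ => by rw [Sym2.eq_swap]
  set F : V → V → ℝ := fun x w => if S x = b ∧ S w = S x then θ s(x, w) else 0 with hF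
  set Gb : V → V → ℝ := fun x w => if S x = b ∧ S w ≠ S x then θ s(x, w) else 0 with hGb
  set Gb' : V → V → ℝ := fun x w => if S w = b ∧ S x ≠ S w then θ s(x, w) else 0 with hGb'
  have Fdef : ∀ x w, F x w = if S x = b ∧ S w = S x then θ s(x, w) else 0 := fun _ _ => rfl
  have Gdef : ∀ x w, Gb x w = if S x = b ∧ S w ≠ S x then θ s(x, w) else 0 := fun _ _ => rfl
  -- total cross-pair sum
  have hcross : ∑ x : V, ∑ w ∈ G.neighborFinset x,
      (if isCross S s(x, w) then θ s(x, w) else 0) = -(4 * ω) := by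
    rw [sum_neighbors_eq_twice_edge_sum G (fun e => if isCross S e then θ e else 0),
      hblueSum]
    ring
  -- pointwise split of the cross indicator
  have hptwise : ∀ x w : V, (if isCross S s(x, w) then θ s(x, w) else 0)
      = Gb x w + Gb' x w := by
    intro x w
    simp only [hGb, hGb', isCross, Sym2.lift_mk]
    rcases Bool.eq_false_or_eq_true (S x) with hx | hx <;>
      rcases Bool.eq_false_or_eq_true (S w) with hw | hw <;>
      rcases Bool.eq_false_or_eq_true b with hbb | hbb <;>
      simp [hx, hw, hbb]
  -- the two one-sided cross sums agree
  have hGG' : ∑ x : V, ∑ w ∈ G.neighborFinset x, Gb x w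
      = ∑ x : V, ∑ w ∈ G.neighborFinset x, Gb' x w := by
    have hc := Finset.sum_comm' (s := (Finset.univ : Finset V))
      (t := fun x => G.neighborFinset x) (t' := (Finset.univ : Finset V))
      (s' := fun w => G.neighborFinset w)
      (by intro x y; simp [SimpleGraph.adj_comm]) (f := Gb)
    rw [hc]
    refine Finset.sum_congr rfl fun x _ => Finset.sum_congr rfl fun w _ => ?_
    simp only [hGb, hGb']
    rw [Sym2.eq_swap]
  have hGbsum : ∑ x : V, ∑ w ∈ G.neighborFinset x, Gb x w = -(2 * ω) := by
    have : ∑ x : V, ∑ w ∈ G.neighborFinset x, (Gb x w + Gb' x w) = -(4 * ω) := by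
      rw [← hcross]
      exact Finset.sum_congr rfl fun x _ => Finset.sum_congr rfl fun w _ =>
        (hptwise x w).symm
    simp only [Finset.sum_add_distrib] at this
    rw [← hGG'] at this
    linarith
  -- sum of the red (within-cluster-b) pairs is 2ω
  have hFsum : ∑ x : V, ∑ w ∈ G.neighborFinset x, F x w = 2 * ω := by
    have hcomb : ∑ x : V, ∑ w ∈ G.neighborFinset x, (F x w + Gb x w) = 0 := by
      have : ∀ x : V, ∑ w ∈ G.neighborFinset x, (F x w + Gb x w)
          = if S x = b then ∑ w ∈ G.neighborFinset x, θ s(x, w) else 0 := by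
        intro x
        by_cases hx : S x = b
        · rw [if_pos hx]
          refine Finset.sum_congr rfl fun w _ => ?_
          rw [Fdef, Gdef]
          by_cases hw : S w = S x
          · rw [if_pos ⟨hx, hw⟩, if_neg (fun h => h.2 hw), add_zero]
          · rw [if_neg (fun h => hw h.2), if_pos ⟨hx, hw⟩, zero_add]
        · rw [if_neg hx]
          refine Finset.sum_eq_zero fun w _ => ?_
          rw [Fdef, Gdef, if_neg (fun h => hx h.1), if_neg (fun h => hx h.1), add_zero]
      rw [Finset.sum_congr rfl fun x _ => this x]
      refine Finset.sum_eq_zero fun x _ => ?_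
      rw [hsum' x]
      simp
    simp only [Finset.sum_add_distrib] at hcomb
    rw [hGbsum] at hcomb
    linarith
  -- each inner red term is nonnegative
  have hF0 : ∀ x : V, ∀ w ∈ G.neighborFinset x, 0 ≤ F x w := by
    intro x w hw
    simp only [hF]
    split
    · next h => exact le_of_lt (hred x w (by simpa using hw) h.2.symm)
    · exact le_rfl
  set redu : ℝ := ∑ w ∈ G.neighborFinset u, F u w with hredu
  -- 2 * redu ≤ 2 * ω
  have hred2 : 2 * redu ≤ 2 * ω := by
    rw [← hFsum]
    set T : Finset V := insert u ((G.neighborFinset u).filter fun x => S x = b) with hT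
    have huN : u ∉ (G.neighborFinset u).filter fun x => S x = b := by
      simp [SimpleGraph.irrefl]
    have step1 : ∑ x ∈ T, ∑ w ∈ G.neighborFinset x, F x w
        ≤ ∑ x : V, ∑ w ∈ G.neighborFinset x, F x w := by
      refine Finset.sum_le_sum_of_subset_of_nonneg (Finset.subset_univ T) ?_
      intro x _ _
      exact Finset.sum_nonneg (hF0 x)
    have step2 : ∑ x ∈ T, ∑ w ∈ G.neighborFinset x, F x w
        = redu + ∑ x ∈ (G.neighborFinset u).filter (fun x => S x = b),
            ∑ w ∈ G.neighborFinset x, F x w := by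
      rw [hT, Finset.sum_insert huN, hredu]
    have step3 : redu ≤ ∑ x ∈ (G.neighborFinset u).filter (fun x => S x = b),
        ∑ w ∈ G.neighborFinset x, F x w := by
      have hterm : ∀ x ∈ (G.neighborFinset u).filter (fun x => S x = b),
          F x u ≤ ∑ w ∈ G.neighborFinset x, F x w := by
        intro x hx
        rcases Finset.mem_filter.mp hx with ⟨hxN, _⟩
        exact Finset.single_le_sum (hF0 x)
          (by simpa [SimpleGraph.mem_neighborFinset, SimpleGraph.adj_comm] using hxN)
      refine le_trans ?_ (Finset.sum_le_sum hterm)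
      -- redu = ∑ x in filter, F x u
      have : ∑ x ∈ (G.neighborFinset u).filter (fun x => S x = b), F x u = redu := by
        rw [hredu, Finset.sum_filter]
        refine Finset.sum_congr rfl fun w hw => ?_
        by_cases hwb : S w = b
        · rw [if_pos hwb, Fdef, Fdef, if_pos ⟨hwb, hb.symm.trans hwb.symm⟩,
            if_pos ⟨hb.symm, hwb.trans hb⟩, Sym2.eq_swap]
        · rw [if_neg hwb, Fdef, if_neg (fun h => hwb (h.2.trans h.1))]
      linarith [Finset.sum_le_sum hterm, this]
    linarith
  have hredω : redu ≤ ω := by linarith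
  -- blue sum at u
  set blueu : ℝ := ∑ w ∈ G.neighborFinset u, (if S w = S u then 0 else θ s(u, w))
    with hblueu
  have hrb : redu + blueu = 0 := by
    have hpt : ∀ w ∈ G.neighborFinset u,
        F u w + (if S w = S u then 0 else θ s(u, w)) = θ s(u, w) := by
      intro w _
      rw [Fdef]
      by_cases hw : S w = S u
      · rw [if_pos ⟨hb.symm, hw⟩, if_pos hw, add_zero]
      · rw [if_neg (fun h => hw h.2), if_neg hw, zero_add]
    rw [hredu, hblueu, ← Finset.sum_add_distrib, Finset.sum_congr rfl hpt, hsum' u]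
  have hvN : v ∈ G.neighborFinset u := by simpa using huv
  have hle : blueu ≤ θ s(u, v) := by
    rw [hblueu, ← Finset.add_sum_erase _ _ hvN, if_neg (Ne.symm hne)]
    have : ∑ w ∈ (G.neighborFinset u).erase v,
        (if S w = S u then 0 else θ s(u, w)) ≤ 0 := by
      refine Finset.sum_nonpos fun w hw => ?_
      by_cases hws : S w = S u
      · simp [hws]
      · rw [if_neg hws]
        exact le_of_lt (hblue u w
          (by simpa using Finset.mem_of_mem_erase hw) (fun h => hws h.symm))
    linarith
  linarith
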